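/- For every real x > 0, the series ∑_{m=0}^∞ (−1)^m / (m! · Γ(m+1)) · (x/2)^{2m} equals (1/(π x)) · ∫_0^π ( sin(x·sin φ) + x·sin φ · cos(x·sin φ) ) · sin φ dφ. -/

import Mathlib

open Real MeasureTheory

lemma wallis_prod (n : ℕ) :
    ∏ i ∈ Finset.range n, (2 * (i : ℝ) + 1) / (2 * i + 2)
      = (2 * n).factorial / (4 ^ n * (n.factorial : ℝ) ^ 2) := by
  induction n with
  | zero => simp
  | succ n ih =>
    rw [Finset.prod_range_succ, ih]
    have h1 : (2 * (n + 1)) = (2 * n + 1) + 1 := by ring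
    rw [h1, Nat.factorial_succ, Nat.factorial_succ, Nat.factorial_succ]
    have h2 : ((2*n).factorial : ℝ) ≠ 0 := Nat.cast_ne_zero.2 (Nat.factorial_ne_zero _)
    have h3 : ((n).factorial : ℝ) ≠ 0 := Nat.cast_ne_zero.2 (Nat.factorial_ne_zero _)
    have h4 : (4 : ℝ) ^ n ≠ 0 := by positivity
    have h5 : (2 * (n:ℝ) + 2) ≠ 0 := by positivity
    push_cast
    field_simp
    ring

lemma term_integral (x : ℝ) (k : ℕ) :
    ∫ φ in (0:ℝ)..π, (-1) ^ k * (x * Real.sin φ) ^ (2 * k) / ((2 * k).factorial : ℝ)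
      = (-1) ^ k / ((k.factorial : ℝ) * k.factorial) * (x / 2) ^ (2 * k) * π := by
  have : ∀ φ : ℝ, (-1:ℝ) ^ k * (x * Real.sin φ) ^ (2 * k) / ((2 * k).factorial : ℝ)
      = ((-1) ^ k * x ^ (2*k) / ((2 * k).factorial : ℝ)) * Real.sin φ ^ (2 * k) := by
    intro φ; rw [mul_pow]; ring
  simp_rw [this]
  rw [intervalIntegral.integral_const_mul, integral_sin_pow_even, wallis_prod]
  have h2 : ((2*k).factorial : ℝ) ≠ 0 := Nat.cast_ne_zero.2 (Nat.factorial_ne_zero _)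
  have h3 : ((k).factorial : ℝ) ≠ 0 := Nat.cast_ne_zero.2 (Nat.factorial_ne_zero _)
  have h4 : (x/2) ^ (2*k) = x ^ (2*k) / 4 ^ k := by
    rw [div_pow, pow_mul, pow_mul]; norm_num
  rw [h4]
  field_simp

lemma cos_int (x : ℝ) :
    (∑' m : ℕ, (-1) ^ m / ((m.factorial : ℝ) * m.factorial) * (x / 2) ^ (2 * m)) * π
      = ∫ φ in (0:ℝ)..π, Real.cos (x * Real.sin φ) := by
  have hxcos : ∀ φ : ℝ, Real.cos (x * Real.sin φ)
      = ∑' k : ℕ, (-1) ^ k * (x * Real.sin φ) ^ (2 * k) / ((2 * k).factorial : ℝ) := fun φ =>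
    Real.cos_eq_tsum _
  rw [intervalIntegral.integral_of_le Real.pi_pos.le]
  simp_rw [hxcos]
  have hint : ∀ k : ℕ, Integrable
      (fun φ : ℝ => (-1) ^ k * (x * Real.sin φ) ^ (2 * k) / ((2 * k).factorial : ℝ))
      (volume.restrict (Set.Ioc 0 π)) := by
    intro k
    apply Continuous.integrableOn_Ioc
    fun_prop
  have hnorm : ∀ k : ℕ, (∫ φ in Set.Ioc (0:ℝ) π,
      ‖(-1) ^ k * (x * Real.sin φ) ^ (2 * k) / ((2 * k).factorial : ℝ)‖)
      ≤ π * (|x| ^ (2*k) / (2*k).factorial) := by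
    intro k
    have : ∀ φ : ℝ, ‖(-1:ℝ) ^ k * (x * Real.sin φ) ^ (2 * k) / ((2 * k).factorial : ℝ)‖
        ≤ |x| ^ (2*k) / ((2*k).factorial : ℝ) := by
      intro φ
      have heq : ‖(-1:ℝ) ^ k * (x * Real.sin φ) ^ (2 * k) / ((2 * k).factorial : ℝ)‖
          = (|x| * |Real.sin φ|) ^ (2 * k) / ((2 * k).factorial : ℝ) := by
        rw [Real.norm_eq_abs, abs_div, abs_mul, abs_pow, abs_pow, abs_neg, abs_one, one_pow,
          one_mul, abs_mul, Nat.abs_cast]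
      rw [heq]
      gcongr
      all_goals first
        | positivity
        | exact mul_le_of_le_one_right (abs_nonneg x) (Real.abs_sin_le_one φ)
    calc (∫ φ in Set.Ioc (0:ℝ) π,
        ‖(-1) ^ k * (x * Real.sin φ) ^ (2 * k) / ((2 * k).factorial : ℝ)‖)
        ≤ ∫ _ in Set.Ioc (0:ℝ) π, |x| ^ (2*k) / ((2*k).factorial:ℝ) := by
          exact integral_mono_of_nonneg
            (Filter.Eventually.of_forall fun φ => norm_nonneg _)
            (integrable_const _) (Filter.Eventually.of_forall this)
      _ = π * (|x| ^ (2*k) / (2*k).factorial) := by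
          simp [Real.volume_Ioc, Real.pi_pos.le]
          try ring
  have hsum : Summable fun k : ℕ => ∫ φ in Set.Ioc (0:ℝ) π,
      ‖(-1) ^ k * (x * Real.sin φ) ^ (2 * k) / ((2 * k).factorial : ℝ)‖ := by
    apply Summable.of_nonneg_of_le
      (fun k => integral_nonneg fun φ => norm_nonneg _) hnorm
    have : Summable fun k : ℕ => |x| ^ k / (k.factorial : ℝ) :=
      Real.summable_pow_div_factorial |x|
    have h2 := (this.comp_injective
      (fun a b h => Nat.eq_of_mul_eq_mul_left two_pos h : Function.Injective fun k : ℕ => 2 * k))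
    exact h2.mul_left π
  rw [← MeasureTheory.integral_tsum_of_summable_integral_norm hint hsum]
  have : ∀ k : ℕ, (∫ φ in Set.Ioc (0:ℝ) π,
      (-1) ^ k * (x * Real.sin φ) ^ (2 * k) / ((2 * k).factorial : ℝ))
      = (-1) ^ k / ((k.factorial : ℝ) * k.factorial) * (x / 2) ^ (2 * k) * π := by
    intro k
    rw [← intervalIntegral.integral_of_le Real.pi_pos.le]
    exact term_integral x k
  simp_rw [this]
  rw [tsum_mul_right]

lemma parts (x : ℝ) :
    (∫ φ in (0:ℝ)..π,
        (Real.sin (x * Real.sin φ) + x * Real.sin φ * Real.cos (x * Real.sin φ)) * Real.sin φ)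
      = x * ∫ φ in (0:ℝ)..π, Real.cos (x * Real.sin φ) := by
  have hderiv : ∀ φ : ℝ, HasDerivAt (fun φ => -Real.cos φ * Real.sin (x * Real.sin φ))
      ((Real.sin (x * Real.sin φ) + x * Real.sin φ * Real.cos (x * Real.sin φ)) * Real.sin φ
        - x * Real.cos (x * Real.sin φ)) φ := by
    intro φ
    have h1 : HasDerivAt (fun φ : ℝ => x * Real.sin φ) (x * Real.cos φ) φ :=
      (Real.hasDerivAt_sin φ).const_mul x
    have h2 : HasDerivAt (fun φ : ℝ => Real.sin (x * Real.sin φ))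
        (Real.cos (x * Real.sin φ) * (x * Real.cos φ)) φ :=
      (Real.hasDerivAt_sin _).comp φ h1
    have h3 : HasDerivAt (fun φ : ℝ => -Real.cos φ) (Real.sin φ) φ := by
      exact (Real.hasDerivAt_cos φ).neg.congr_deriv (neg_neg _)
    have := h3.mul h2
    refine this.congr_deriv (Eq.symm ?_)
    have hs := Real.sin_sq_add_cos_sq φ
    linear_combination (x * Real.cos (x * Real.sin φ)) * hs
  have hcont : Continuous fun φ : ℝ =>
      (Real.sin (x * Real.sin φ) + x * Real.sin φ * Real.cos (x * Real.sin φ)) * Real.sin φ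
        - x * Real.cos (x * Real.sin φ) := by fun_prop
  have h0 := intervalIntegral.integral_eq_sub_of_hasDerivAt
    (fun φ _ => hderiv φ) (hcont.intervalIntegrable 0 π)
  simp only [Real.sin_pi, Real.sin_zero, mul_zero, Real.sin_zero, mul_zero, Real.cos_pi,
    Real.cos_zero] at h0
  have hsub : (∫ φ in (0:ℝ)..π,
      ((Real.sin (x * Real.sin φ) + x * Real.sin φ * Real.cos (x * Real.sin φ)) * Real.sin φ
        - x * Real.cos (x * Real.sin φ)))
      = (∫ φ in (0:ℝ)..π,
        (Real.sin (x * Real.sin φ) + x * Real.sin φ * Real.cos (x * Real.sin φ)) * Real.sin φ)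
        - ∫ φ in (0:ℝ)..π, x * Real.cos (x * Real.sin φ) := by
    apply intervalIntegral.integral_sub
    · exact (by fun_prop : Continuous fun φ : ℝ =>
        (Real.sin (x * Real.sin φ) + x * Real.sin φ * Real.cos (x * Real.sin φ)) * Real.sin φ).intervalIntegrable 0 π
    · exact (by fun_prop : Continuous fun φ : ℝ =>
        x * Real.cos (x * Real.sin φ)).intervalIntegrable 0 π
  rw [hsub] at h0
  rw [intervalIntegral.integral_const_mul] at h0
  linarith [h0]

theorem bessel_J0_integral_representation (x : ℝ) (hx : 0 < x) :
    ∑' m : ℕ, (-1) ^ m / (m.factorial * Real.Gamma (m + 1)) * (x / 2) ^ (2 * m)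
      = (1 / (π * x)) *
        ∫ φ in (0:ℝ)..π,
          (Real.sin (x * Real.sin φ) + x * Real.sin φ * Real.cos (x * Real.sin φ)) *
            Real.sin φ := by
  have hg : ∀ m : ℕ, Real.Gamma ((m : ℝ) + 1) = (m.factorial : ℝ) :=
    Real.Gamma_nat_eq_factorial
  simp_rw [hg]
  rw [parts x, ← cos_int x]
  have hπ : (π : ℝ) ≠ 0 := Real.pi_ne_zero
  field_simp
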